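/- arXiv:2105.05427 — 11 statements merged into one kernel-verified Lean document; each statement's English description precedes it below -/
import Mathlib

section
/- The function h(β) = (1−3β)·ln β + 2β(β−1) satisfies h(β) > 0 for β > 1 and h(β) < 0 for 0 < β < 1. -/
private lemma aux_deriv (x : ℝ) (hx : 0 < x) :
    HasDerivAt (fun y : ℝ => y ^ 2 - 1 - 2 * y * Real.log y)
      (2 * x - 2 - 2 * Real.log x) x := by
  have h1 : HasDerivAt (fun y : ℝ => y ^ 2 - 1) (2 * x) x := by
    simpa using (hasDerivAt_pow 2 x).sub_const 1
  have h2 : HasDerivAt (fun y : ℝ => 2 * y) 2 x := by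
    simpa using (hasDerivAt_id x).const_mul 2
  have h3 : HasDerivAt (fun y : ℝ => 2 * y * Real.log y)
      (2 * Real.log x + 2 * x * x⁻¹) x :=
    h2.mul (Real.hasDerivAt_log hx.ne')
  have h4 : 2 * Real.log x + 2 * x * x⁻¹ = 2 * Real.log x + 2 := by
    field_simp
  rw [h4] at h3
  have := h1.sub h3
  exact this.congr_deriv (by ring)

private lemma aux_cont : Continuous (fun y : ℝ => y ^ 2 - 1 - 2 * y * Real.log y) := by
  have h : Continuous (fun y : ℝ => y ^ 2 - 1 - 2 * (y * Real.log y)) :=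
    ((continuous_pow 2).sub continuous_const).sub (continuous_const.mul Real.continuous_mul_log)
  convert h using 2 with y
  ring

private lemma key_gt {x : ℝ} (hx : 1 < x) : 2 * x * Real.log x < x ^ 2 - 1 := by
  have hmono : StrictMonoOn (fun y : ℝ => y ^ 2 - 1 - 2 * y * Real.log y) (Set.Ici 1) := by
    apply StrictMonoOn.mono (s := Set.Ici 1) ?_ (le_refl _)
    apply strictMonoOn_of_deriv_pos (convex_Ici 1) aux_cont.continuousOn
    intro y hy
    rw [interior_Ici] at hy
    have hy1 : (1 : ℝ) < y := hy
    have hy0 : (0 : ℝ) < y := by linarith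
    rw [(aux_deriv y hy0).deriv]
    have hlog : Real.log y < y - 1 := Real.log_lt_sub_one_of_pos hy0 (by linarith)
    linarith
  have h0 : (fun y : ℝ => y ^ 2 - 1 - 2 * y * Real.log y) 1 = 0 := by simp
  have := hmono (Set.self_mem_Ici) (le_of_lt hx : (1:ℝ) ≤ x) hx
  rw [h0] at this
  simp only at this
  linarith

private lemma key_lt {x : ℝ} (hx0 : 0 < x) (hx1 : x < 1) : x ^ 2 - 1 < 2 * x * Real.log x := by
  have hmono : StrictMonoOn (fun y : ℝ => y ^ 2 - 1 - 2 * y * Real.log y) (Set.Icc 0 1) := by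
    apply strictMonoOn_of_deriv_pos (convex_Icc 0 1) aux_cont.continuousOn
    intro y hy
    rw [interior_Icc] at hy
    have hy0 : (0 : ℝ) < y := hy.1
    rw [(aux_deriv y hy0).deriv]
    have hlog : Real.log y < y - 1 := Real.log_lt_sub_one_of_pos hy0 (by linarith [hy.2])
    linarith
  have h0 : (fun y : ℝ => y ^ 2 - 1 - 2 * y * Real.log y) 1 = 0 := by simp
  have hxm : x ∈ Set.Icc (0:ℝ) 1 := ⟨hx0.le, hx1.le⟩
  have := hmono hxm (Set.right_mem_Icc.mpr (by norm_num)) hx1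
  rw [h0] at this
  simp only at this
  linarith

theorem stmt_2 (β : ℝ) :
    (1 < β → (1 - 3 * β) * Real.log β + 2 * β * (β - 1) > 0) ∧
    (0 < β → β < 1 → (1 - 3 * β) * Real.log β + 2 * β * (β - 1) < 0) := by
  constructor
  · intro hβ
    have hβ0 : (0 : ℝ) < β := by linarith
    have hkey := key_gt hβ
    have h1 : (0 : ℝ) < 3 * β - 1 := by linarith
    have h2 : (3 * β - 1) * (2 * β * Real.log β) < (3 * β - 1) * (β ^ 2 - 1) :=
      mul_lt_mul_of_pos_left hkey h1
    nlinarith [mul_pos (mul_pos (show (0:ℝ) < β - 1 by linarith)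
      (show (0:ℝ) < β - 1 by linarith)) (show (0:ℝ) < β - 1 by linarith), hβ0]
  · intro hβ0 hβ1
    rcases le_or_gt β (1/3) with hc | hc
    · have hlog : Real.log β ≤ β - 1 := Real.log_le_sub_one_of_pos hβ0
      have hnn : (0 : ℝ) ≤ 1 - 3 * β := by linarith
      have h2 : (1 - 3 * β) * Real.log β ≤ (1 - 3 * β) * (β - 1) :=
        mul_le_mul_of_nonneg_left hlog hnn
      nlinarith [sq_nonneg (1 - β), mul_pos (show (0:ℝ) < 1 - β by linarith)
        (show (0:ℝ) < 1 - β by linarith)]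
    · have hkey := key_lt hβ0 hβ1
      have h1 : (0 : ℝ) < 3 * β - 1 := by linarith
      have h2 : (3 * β - 1) * (β ^ 2 - 1) < (3 * β - 1) * (2 * β * Real.log β) :=
        mul_lt_mul_of_pos_left hkey h1
      nlinarith [mul_pos (mul_pos (show (0:ℝ) < 1 - β by linarith)
        (show (0:ℝ) < 1 - β by linarith)) (show (0:ℝ) < 1 - β by linarith), hβ0]
end

section
/- The function g(β) = (β²−3β)·ln β + 2(β−1) satisfies g(β) > 0 for β > 1 and g(β) < 0 for 0 < β < 1. -/
lemma key_log (x : ℝ) (hx : 1 < x) : 2 * x * Real.log x < x ^ 2 - 1 := by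
  have h0 : (0:ℝ) < 1 := one_pos
  set f : ℝ → ℝ := fun x => x ^ 2 - 1 - 2 * x * Real.log x with hf
  have hmono : StrictMonoOn f (Set.Ici 1) := by
    apply strictMonoOn_of_deriv_pos (convex_Ici 1)
    · apply ContinuousOn.sub
      · exact (continuous_pow 2).continuousOn.sub continuousOn_const
      · apply ContinuousOn.mul
        · exact (continuous_const.mul continuous_id).continuousOn
        · exact Real.continuousOn_log.mono (by intro y hy; simp at hy ⊢; linarith)
    · intro y hy
      rw [interior_Ici] at hy
      have hy0 : (0:ℝ) < y := by linarith [Set.mem_Ioi.mp hy]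
      have hy1 : 1 < y := Set.mem_Ioi.mp hy
      have hd : HasDerivAt f (2 * y - (2 * Real.log y + 2)) y := by
        have h1 : HasDerivAt (fun x : ℝ => x ^ 2 - 1) (2 * y) y := by
          simpa using (hasDerivAt_pow 2 y).sub_const 1
        have ha : HasDerivAt (fun x : ℝ => 2 * x) 2 y := by
          simpa using (hasDerivAt_id y).const_mul 2
        have h2 : HasDerivAt (fun x : ℝ => 2 * x * Real.log x)
            (2 * Real.log y + 2) y := by
          have := ha.mul (Real.hasDerivAt_log hy0.ne')
          refine this.congr_deriv ?_
          rw [mul_assoc, mul_inv_cancel₀ hy0.ne', mul_one]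
        exact h1.sub h2
      rw [hd.deriv]
      have hlog := Real.log_lt_sub_one_of_pos hy0 (by linarith)
      linarith
  have h1 : f 1 = 0 := by simp [hf]
  have := hmono (Set.self_mem_Ici) (Set.mem_Ici.mpr hx.le) hx
  rw [h1] at this
  simp only [hf] at this
  linarith

theorem stmt_3 (β : ℝ) :
    (1 < β → (β ^ 2 - 3 * β) * Real.log β + 2 * (β - 1) > 0) ∧
    (0 < β → β < 1 → (β ^ 2 - 3 * β) * Real.log β + 2 * (β - 1) < 0) := by
  constructor
  · intro hβ
    by_cases h3 : β < 3
    · have hk : β ^ 2 - 1 - 2 * β * Real.log β > 0 := by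
        have := key_log β hβ; linarith
      have h1 : 0 < (3 - β) * (β ^ 2 - 1 - 2 * β * Real.log β) :=
        mul_pos (by linarith) hk
      have h2 : 0 < (β - 1) ^ 3 := pow_pos (by linarith) 3
      nlinarith [h1, h2]
    · have hlog : 0 < Real.log β := Real.log_pos hβ
      have h1 : 0 ≤ (β ^ 2 - 3 * β) * Real.log β :=
        mul_nonneg (by nlinarith) hlog.le
      linarith
  · intro hβ0 hβ1
    have hx : 1 < 1 / β := by rw [lt_div_iff₀ hβ0]; linarith
    have hk := key_log (1 / β) hx
    rw [one_div, Real.log_inv] at hk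
    have hb : β⁻¹ * β = 1 := inv_mul_cancel₀ hβ0.ne'
    have hk2 : β ^ 2 - 1 - 2 * β * Real.log β < 0 := by
      nlinarith [mul_pos hβ0 hβ0, hk, hb]
    have h1 : (3 - β) * (β ^ 2 - 1 - 2 * β * Real.log β) < 0 :=
      mul_neg_of_pos_of_neg (by linarith) hk2
    have h2 : (β - 1) ^ 3 < 0 := by
      have : β - 1 < 0 := by linarith
      exact Odd.pow_neg ⟨1, by norm_num⟩ this
    nlinarith [h1, h2]
end

section
/- For all β > 0 with β ≠ 1, we have −((3β−1)/(β−1))·ln β + 2β > 0. -/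
open Real Set

private lemma aux_mono : MonotoneOn (fun x : ℝ => (x - x⁻¹) / 2 - Real.log x) (Set.Ioi (0:ℝ)) := by
  apply monotoneOn_of_deriv_nonneg (convex_Ioi 0)
  · apply ContinuousOn.sub
    · apply ContinuousOn.div_const
      exact continuousOn_id.sub (continuousOn_inv₀.mono (by intro x hx; exact ne_of_gt hx))
    · exact Real.continuousOn_log.mono (by intro x hx; exact ne_of_gt hx)
  · intro x hx
    rw [interior_Ioi] at hx
    apply DifferentiableAt.differentiableWithinAt
    have hx0 : x ≠ 0 := ne_of_gt hx
    fun_prop (disch := assumption)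
  · intro x hx
    rw [interior_Ioi] at hx
    have hx0 : x ≠ 0 := ne_of_gt hx
    have hd : deriv (fun x : ℝ => (x - x⁻¹) / 2 - Real.log x) x
        = (1 - -(x^2)⁻¹) / 2 - x⁻¹ := by
      rw [deriv_fun_sub, deriv_div_const, deriv_fun_sub, deriv_id'', deriv_inv, Real.deriv_log]
      · exact differentiableAt_id
      · exact differentiableAt_inv hx0
      · apply DifferentiableAt.div_const
        exact differentiableAt_id.sub (differentiableAt_inv hx0)
      · exact Real.differentiableAt_log hx0
    rw [hd]
    rw [div_sub' (by positivity : (2:ℝ) ≠ 0)]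
    apply div_nonneg _ (by norm_num)
    have h1 : (x^2)⁻¹ = 1 / x^2 := by ring
    have : 1 - -(x ^ 2)⁻¹ - 2 * x⁻¹ = (x - 1)^2 / x^2 := by
      field_simp
      ring
    rw [this]
    positivity

private lemma log_le_half {x : ℝ} (hx : 1 ≤ x) : Real.log x ≤ (x - x⁻¹) / 2 := by
  have h := aux_mono (by norm_num : (1:ℝ) ∈ Set.Ioi 0)
    (Set.mem_Ioi.mpr (by linarith)) hx
  dsimp only at h
  have h0 : ((1:ℝ) - 1⁻¹)/2 - Real.log 1 = 0 := by norm_num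
  linarith [h, h0]

private lemma half_le_log {x : ℝ} (hx0 : 0 < x) (hx1 : x ≤ 1) : (x - x⁻¹) / 2 ≤ Real.log x := by
  have h := aux_mono (Set.mem_Ioi.mpr hx0) (by norm_num : (1:ℝ) ∈ Set.Ioi 0) hx1
  dsimp only at h
  have h0 : ((1:ℝ) - 1⁻¹)/2 - Real.log 1 = 0 := by norm_num
  linarith [h, h0]

theorem stmt_4 (β : ℝ) (hβ : 0 < β) (hne : β ≠ 1) :
    -((3 * β - 1) / (β - 1)) * Real.log β + 2 * β > 0 := by
  set L := Real.log β with hL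
  have hne' : β - 1 ≠ 0 := sub_ne_zero.mpr hne
  rcases lt_or_gt_of_ne hne with h1 | h1
  · -- β < 1
    have hLneg : L < 0 := Real.log_neg hβ h1
    rcases le_or_gt β (1/3) with h3 | h3
    · -- β ≤ 1/3 : coefficient (3β-1)/(β-1) ≥ 0 and L < 0
      have hc : (3 * β - 1) / (β - 1) ≥ 0 := by
        rw [ge_iff_le, div_nonneg_iff]
        right
        constructor <;> linarith
      nlinarith [mul_nonneg hc (le_of_lt (neg_pos.mpr hLneg))]
    · -- 1/3 < β < 1 : use L ≥ (β - β⁻¹)/2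
      have hb := half_le_log hβ (le_of_lt h1)
      have hkey : 2 * β * (β - 1) - (3 * β - 1) * L < 0 := by
        have h2 : (3 * β - 1) * ((β - β⁻¹)/2) ≤ (3 * β - 1) * L :=
          mul_le_mul_of_nonneg_left hb (by linarith)
        have hinv : β⁻¹ = 1 / β := by ring
        have hβne : β ≠ 0 := ne_of_gt hβ
        have h4 : 2 * β * (β - 1) - (3 * β - 1) * ((β - β⁻¹)/2) = (β - 1)^3 / (2 * β) := by
          field_simp
          ring
        have h5 : (β - 1)^3 / (2 * β) < 0 := by
          apply div_neg_of_neg_of_pos _ (by linarith)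
          exact Odd.pow_neg ⟨1, by norm_num⟩ (by linarith)
        linarith
      have heq : -((3 * β - 1) / (β - 1)) * L + 2 * β
          = (2 * β * (β - 1) - (3 * β - 1) * L) / (β - 1) := by
        field_simp
        ring
      rw [heq]
      exact div_pos_of_neg_of_neg hkey (by linarith)
  · -- β > 1 : use L ≤ (β - β⁻¹)/2
    have hb := log_le_half (le_of_lt h1)
    have hkey : 2 * β * (β - 1) - (3 * β - 1) * L > 0 := by
      have h2 : (3 * β - 1) * L ≤ (3 * β - 1) * ((β - β⁻¹)/2) :=
        mul_le_mul_of_nonneg_left hb (by linarith)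
      have hβne : β ≠ 0 := ne_of_gt hβ
      have h4 : 2 * β * (β - 1) - (3 * β - 1) * ((β - β⁻¹)/2) = (β - 1)^3 / (2 * β) := by
        field_simp
        ring
      have h5 : (0:ℝ) < (β - 1)^3 / (2 * β) := by
        have hb1 : 0 < β - 1 := by linarith
        positivity
      linarith
    have heq : -((3 * β - 1) / (β - 1)) * L + 2 * β
        = (2 * β * (β - 1) - (3 * β - 1) * L) / (β - 1) := by
      field_simp
      ring
    rw [heq]
    exact div_pos hkey (by linarith)
end

section
/- For all β > 0 with β ≠ 1, we have ((β²−3β)/(β−1))·ln β + 2 > 0. -/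
lemma aux_log (x : ℝ) (hx : 1 ≤ x) : 2 * Real.log x ≤ x - 1/x := by
  have hderiv : ∀ u ∈ Set.Ioi (1:ℝ),
      HasDerivAt (fun u : ℝ => u - u⁻¹ - 2 * Real.log u) ((1 - u⁻¹)^2) u := by
    intro u hu
    have hu0 : u ≠ 0 := ne_of_gt (lt_trans one_pos hu)
    have h1 := (hasDerivAt_id u).sub (hasDerivAt_inv hu0)
    have h2 := ((Real.hasDerivAt_log hu0).const_mul (2:ℝ))
    have h3 := h1.sub h2
    refine HasDerivAt.congr_deriv h3 ?_
    field_simp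
    ring
  have hcont : ContinuousOn (fun u : ℝ => u - u⁻¹ - 2 * Real.log u) (Set.Ici 1) := by
    have hne : ∀ u ∈ Set.Ici (1:ℝ), u ≠ 0 := fun u hu => ne_of_gt (lt_of_lt_of_le one_pos hu)
    exact ((continuousOn_id.sub (continuousOn_inv₀.mono hne)).sub
      (continuousOn_const.mul (Real.continuousOn_log.mono hne)))
  have hmono : MonotoneOn (fun u : ℝ => u - u⁻¹ - 2 * Real.log u) (Set.Ici 1) := by
    apply monotoneOn_of_deriv_nonneg (convex_Ici 1) hcont
    · intro u hu
      rw [interior_Ici] at hu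
      exact (hderiv u hu).differentiableAt.differentiableWithinAt
    · intro u hu
      rw [interior_Ici] at hu
      rw [(hderiv u hu).deriv]
      positivity
  have h := hmono (Set.mem_Ici.2 le_rfl) (Set.mem_Ici.2 hx) hx
  simp only [Real.log_one, inv_one] at h
  rw [one_div]
  linarith

theorem stmt_5 (β : ℝ) (hβ : 0 < β) (hne : β ≠ 1) :
    ((β ^ 2 - 3 * β) / (β - 1)) * Real.log β + 2 > 0 := by
  obtain ⟨s, hs0, rfl⟩ : ∃ s : ℝ, 0 < s ∧ s ^ 2 = β :=
    ⟨Real.sqrt β, Real.sqrt_pos.2 hβ, Real.sq_sqrt hβ.le⟩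
  have hsne : s ≠ 1 := fun h => hne (by rw [h]; norm_num)
  set L := Real.log s with hLdef
  have hlogβ : Real.log (s ^ 2) = 2 * L := by
    rw [Real.log_pow]; push_cast; ring
  rw [hlogβ]
  have hinv : s * s⁻¹ = 1 := mul_inv_cancel₀ (ne_of_gt hs0)
  have key : ((s ^ 2) ^ 2 - 3 * s ^ 2) / (s ^ 2 - 1) * (2 * L) + 2
      = (((s ^ 2) ^ 2 - 3 * s ^ 2) * (2 * L) + 2 * (s ^ 2 - 1)) / (s ^ 2 - 1) := by
    have hne1 : s ^ 2 - 1 ≠ 0 := by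
      intro h; apply hsne; nlinarith
    field_simp
  rw [key]
  rcases lt_or_gt_of_ne hsne with h1 | h1
  · -- s < 1
    have hL : L < 0 := Real.log_neg hs0 h1
    have haux := aux_log s⁻¹ ((one_le_inv₀ hs0).2 h1.le)
    rw [Real.log_inv, one_div, inv_inv] at haux
    -- haux : 2 * -L ≤ s⁻¹ - s ; multiply by s > 0
    have hkey : s ^ 2 - 1 ≤ s * (2 * L) := by
      have := mul_le_mul_of_nonneg_left haux hs0.le
      nlinarith [this, hinv]
    apply div_pos_of_neg_of_neg
    · have A : 0 ≤ s * (3 - s ^ 2) * (s * (2 * L) - (s ^ 2 - 1)) := by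
        apply mul_nonneg (mul_nonneg hs0.le (by nlinarith)) (by linarith)
      have B : 0 < (1 - s ^ 2) * ((1 - s) ^ 2 * (s + 2)) :=
        mul_pos (by nlinarith) (mul_pos (pow_pos (by linarith) 2) (by linarith))
      nlinarith [A, B]
    · nlinarith
  · -- s > 1
    have hL : 0 < L := Real.log_pos h1
    have haux := aux_log s h1.le
    rw [one_div] at haux
    have hkey : s * (2 * L) ≤ s ^ 2 - 1 := by
      have := mul_le_mul_of_nonneg_left haux hs0.le
      nlinarith [this, hinv]
    apply div_pos
    · rcases le_or_gt 3 (s ^ 2) with h3 | h3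
      · nlinarith [hL, mul_nonneg (mul_nonneg (sq_nonneg s) (by linarith : (0:ℝ) ≤ s ^ 2 - 3)) hL.le]
      · have A : 0 ≤ s * (3 - s ^ 2) * ((s ^ 2 - 1) - s * (2 * L)) := by
          apply mul_nonneg (mul_nonneg hs0.le (by linarith)) (by linarith)
        have B : 0 < (s ^ 2 - 1) * ((s - 1) ^ 2 * (s + 2)) :=
          mul_pos (by nlinarith) (mul_pos (pow_pos (by linarith) 2) (by linarith))
        nlinarith [A, B]
    · nlinarith
end

section
/- In the random double auction with fixed commission r ∈ (0,1), the buyer's payoff from bidding b when his value is v_B, against ask a with b − a > r, equals ((b−a−r)/(1−r))·(v_B − (b+a+r)/2); for any fixed a, this expression (extended by 0 when b − a ≤ r) is maximized over b at b = v_B whenever v_B − a > r, i.e., truthful bidding is optimal. -/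
/-- Buyer's payoff in the random double auction with commission `r`, when bidding `b`
against ask `a` with true value `vB`. -/
noncomputable def buyerPayoff (r vB a b : ℝ) : ℝ :=
  if b - a > r then ((b - a - r) / (1 - r)) * (vB - (b + a + r) / 2) else 0

theorem stmt_6 (r vB a : ℝ) (hr0 : 0 < r) (hr1 : r < 1) (h : vB - a > r) :
    (∀ b : ℝ, b - a > r →
      buyerPayoff r vB a b = ((b - a - r) / (1 - r)) * (vB - (b + a + r) / 2)) ∧
    (∀ b : ℝ, buyerPayoff r vB a b ≤ buyerPayoff r vB a vB) := by
  have h1r : (0:ℝ) < 1 - r := by linarith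
  constructor
  · intro b hb
    simp [buyerPayoff, hb]
  · intro b
    have hv : buyerPayoff r vB a vB = ((vB - a - r) / (1 - r)) * (vB - (vB + a + r) / 2) := by
      simp [buyerPayoff, h]
    rw [hv]
    by_cases hb : b - a > r
    · simp only [buyerPayoff, if_pos hb]
      rw [div_mul_eq_mul_div, div_mul_eq_mul_div, div_le_div_iff₀ h1r h1r]
      nlinarith [sq_nonneg (vB - b)]
    · simp only [buyerPayoff, if_neg hb]
      exact mul_nonneg (div_nonneg (by linarith) h1r.le) (by linarith)
end

section
/- Let r ∈ (0,1) and define the measure π on [0,1]² with density π(v_B, v_S) = 2r²/(v_B − v_S)³ for v_B − v_S > r, v_B ≠ 1, v_S ≠ 0; density r²/(1−v_S)² on the segment {v_B = 1, 0 < v_S < 1−r}; density r²/v_B² on {v_S = 0, r < v_B < 1}; and an atom of mass r² at (1,0). Then π is a probability measure, i.e., its total mass equals 1. -/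
open MeasureTheory

private lemma calcB (r : ℝ) (hr0 : 0 < r) (hr1 : r < 1) :
    ∫ b in r..1, r ^ 2 / b ^ 2 = r - r ^ 2 := by
  have h : ∀ b ∈ Set.uIcc r 1, HasDerivAt (fun b : ℝ => -(r ^ 2) / b) (r ^ 2 / b ^ 2) b := by
    intro b hb
    rw [Set.uIcc_of_le hr1.le] at hb
    have hbne : b ≠ 0 := by nlinarith [hb.1, hb.2]
    have := ((hasDerivAt_id b).inv hbne).const_mul (-(r ^ 2))
    convert this using 1
    · rfl
    · rfl
    · funext y; simp [div_eq_mul_inv]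
    field_simp
    simp [hbne]
  have hint : IntervalIntegrable (fun b : ℝ => r ^ 2 / b ^ 2) volume r 1 := by
    apply ContinuousOn.intervalIntegrable
    apply ContinuousOn.div continuousOn_const (by fun_prop)
    intro b hb
    rw [Set.uIcc_of_le hr1.le] at hb
    have : b ≠ 0 := by nlinarith [hb.1, hb.2]
    positivity
  rw [intervalIntegral.integral_eq_sub_of_hasDerivAt h hint]
  field_simp
  ring

private lemma calcA (r : ℝ) (hr0 : 0 < r) (hr1 : r < 1) :
    ∫ s in (0:ℝ)..(1 - r), r ^ 2 / (1 - s) ^ 2 = r - r ^ 2 := by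
  have h : ∀ s ∈ Set.uIcc (0:ℝ) (1 - r), HasDerivAt (fun s : ℝ => r ^ 2 / (1 - s))
      (r ^ 2 / (1 - s) ^ 2) s := by
    intro s hs
    rw [Set.uIcc_of_le (by linarith)] at hs
    have hne : (1 : ℝ) - s ≠ 0 := by nlinarith [hs.1, hs.2]
    have h1 : HasDerivAt (fun s : ℝ => 1 - s) (-1) s := by
      simpa using (hasDerivAt_id s).const_sub 1
    have := (h1.inv hne).const_mul (r ^ 2)
    convert this using 1
    · rfl
    · rfl
    · funext y; simp [div_eq_mul_inv]
    field_simp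
  have hint : IntervalIntegrable (fun s : ℝ => r ^ 2 / (1 - s) ^ 2) volume 0 (1 - r) := by
    apply ContinuousOn.intervalIntegrable
    apply ContinuousOn.div continuousOn_const (by fun_prop)
    intro s hs
    rw [Set.uIcc_of_le (by linarith)] at hs
    have : (1:ℝ) - s ≠ 0 := by nlinarith [hs.1, hs.2]
    positivity
  rw [intervalIntegral.integral_eq_sub_of_hasDerivAt h hint]
  rw [show (1:ℝ) - (1 - r) = r by ring]
  field_simp
  ring

private lemma calcC (r : ℝ) (hr0 : 0 < r) (s : ℝ) (hs1 : s + r ≤ 1) :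
    ∫ b in (s + r)..1, 2 * r ^ 2 / (b - s) ^ 3 = 1 - r ^ 2 / (1 - s) ^ 2 := by
  have h : ∀ b ∈ Set.uIcc (s + r) 1, HasDerivAt (fun b : ℝ => -(r ^ 2) / (b - s) ^ 2)
      (2 * r ^ 2 / (b - s) ^ 3) b := by
    intro b hb
    rw [Set.uIcc_of_le hs1] at hb
    have hbs : r ≤ b - s := by linarith [hb.1]
    have hne : b - s ≠ 0 := by nlinarith
    have h1 : HasDerivAt (fun b : ℝ => (b - s) ^ 2) (2 * (b - s)) b := by
      exact (((hasDerivAt_id b).sub_const s).pow 2).congr_deriv (by simp)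
    have := (h1.inv (by positivity)).const_mul (-(r ^ 2))
    convert this using 1
    · rfl
    · rfl
    · funext y; simp [div_eq_mul_inv]
    field_simp
  have hint : IntervalIntegrable (fun b : ℝ => 2 * r ^ 2 / (b - s) ^ 3) volume (s + r) 1 := by
    apply ContinuousOn.intervalIntegrable
    apply ContinuousOn.div continuousOn_const (by fun_prop)
    intro b hb
    rw [Set.uIcc_of_le hs1] at hb
    have h0 : 0 < b - s := hr0.trans_le (by linarith [hb.1])
    positivity
  rw [intervalIntegral.integral_eq_sub_of_hasDerivAt h hint]
  have h1s : (1:ℝ) - s ≠ 0 := by nlinarith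
  rw [show s + r - s = r by ring]
  field_simp
  ring

theorem stmt_8 (r : ℝ) (hr0 : 0 < r) (hr1 : r < 1) :
    (∫ p in {p : ℝ × ℝ | r < p.1 - p.2 ∧ p.1 < 1 ∧ 0 < p.2},
        2 * r ^ 2 / (p.1 - p.2) ^ 3) +
      (∫ s in (0 : ℝ)..(1 - r), r ^ 2 / (1 - s) ^ 2) +
      (∫ b in r..1, r ^ 2 / b ^ 2) + r ^ 2 = 1 := by
  set f : ℝ × ℝ → ℝ := fun p => 2 * r ^ 2 / (p.1 - p.2) ^ 3 with hf
  set S : Set (ℝ × ℝ) := {p : ℝ × ℝ | r < p.1 - p.2 ∧ p.1 < 1 ∧ 0 < p.2} with hSdef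
  have hS : MeasurableSet S := by
    have : IsOpen S := by
      have : S = ((fun p : ℝ × ℝ => p.1 - p.2) ⁻¹' Set.Ioi r) ∩
          (((fun p : ℝ × ℝ => p.1) ⁻¹' Set.Iio 1) ∩ ((fun p : ℝ × ℝ => p.2) ⁻¹' Set.Ioi 0)) := by
        ext p; simp [hSdef, and_assoc]
      rw [this]
      exact ((isOpen_Ioi.preimage (by fun_prop)).inter
        ((isOpen_Iio.preimage (by fun_prop)).inter (isOpen_Ioi.preimage (by fun_prop))))
    exact this.measurableSet
  have hsub : S ⊆ Set.Ioo (0:ℝ) 1 ×ˢ Set.Ioo (0:ℝ) 1 := by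
    rintro ⟨b, s⟩ ⟨h1, h2, h3⟩
    exact ⟨⟨by linarith, h2⟩, h3, by linarith⟩
  have hvol : volume S ≠ ⊤ := by
    apply ne_top_of_le_ne_top _ (measure_mono hsub)
    rw [Measure.volume_eq_prod, Measure.prod_prod]
    simp [Real.volume_Ioo]
  have hfm : AEStronglyMeasurable f volume := by
    apply Measurable.aestronglyMeasurable
    fun_prop
  have hIntOn : IntegrableOn f S volume := by
    apply Measure.integrableOn_of_bounded (M := 2 / r) hvol hfm
    apply (ae_restrict_iff' hS).2
    apply ae_of_all
    rintro ⟨b, s⟩ ⟨h1, _, _⟩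
    have hbs : r < b - s := h1
    have hbs0 : 0 < b - s := hr0.trans hbs
    have h3 : r ^ 3 ≤ (b - s) ^ 3 := by nlinarith [sq_nonneg (b - s + r), sq_nonneg (b - s - r)]
    show ‖2 * r ^ 2 / (b - s) ^ 3‖ ≤ 2 / r
    rw [Real.norm_eq_abs, abs_of_nonneg (by positivity),
      div_le_div_iff₀ (by positivity) (by positivity)]
    nlinarith [sq_nonneg r]
  have hIind : Integrable (S.indicator f) volume :=
    (integrable_indicator_iff hS).2 hIntOn
  have key : (∫ p in S, f p) = 1 - 2 * r + r ^ 2 := by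
    rw [← integral_indicator hS]
    rw [Measure.volume_eq_prod] at hIind ⊢
    rw [MeasureTheory.integral_prod_symm _ hIind]
    have inner : ∀ s : ℝ, (∫ b : ℝ, S.indicator f (b, s)) =
        (Set.Ioo (0:ℝ) (1 - r)).indicator (fun s => 1 - r ^ 2 / (1 - s) ^ 2) s := by
      intro s
      by_cases hsmem : s ∈ Set.Ioo (0:ℝ) (1 - r)
      · obtain ⟨hs0, hs1⟩ := hsmem
        have heq : ∀ b : ℝ, S.indicator f (b, s) =
            (Set.Ioo (s + r) 1).indicator (fun b => 2 * r ^ 2 / (b - s) ^ 3) b := by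
          intro b
          by_cases hb : b ∈ Set.Ioo (s + r) 1
          · have hmemS : (b, s) ∈ S := by
              show r < b - s ∧ b < 1 ∧ 0 < s
              exact ⟨by linarith [hb.1], hb.2, hs0⟩
            rw [Set.indicator_of_mem hb, Set.indicator_of_mem hmemS]
          · rw [Set.indicator_of_notMem hb, Set.indicator_of_notMem]
            intro hmem
            have hmem' : r < b - s ∧ b < 1 ∧ 0 < s := hmem
            exact hb ⟨by linarith [hmem'.1], hmem'.2.1⟩
        rw [Set.indicator_of_mem (Set.mem_Ioo.mpr ⟨hs0, hs1⟩)]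
        simp only [heq]
        rw [integral_indicator measurableSet_Ioo, ← integral_Ioc_eq_integral_Ioo,
          ← intervalIntegral.integral_of_le (by linarith)]
        simpa using calcC r hr0 s (by linarith)
      · rw [Set.indicator_of_notMem hsmem]
        have heq : ∀ b : ℝ, S.indicator f (b, s) = 0 := by
          intro b
          apply Set.indicator_of_notMem
          intro hmem
          obtain ⟨h1, h2, h3⟩ : r < b - s ∧ b < 1 ∧ 0 < s := hmem
          simp only [Set.mem_Ioo, not_and, not_lt] at hsmem
          have := hsmem h3
          linarith
        simp only [heq, integral_zero]
    simp only [inner]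
    rw [integral_indicator measurableSet_Ioo, ← integral_Ioc_eq_integral_Ioo,
      ← intervalIntegral.integral_of_le (by linarith : (0:ℝ) ≤ 1 - r)]
    have hintA : IntervalIntegrable (fun s : ℝ => r ^ 2 / (1 - s) ^ 2) volume 0 (1 - r) := by
      apply ContinuousOn.intervalIntegrable
      apply ContinuousOn.div continuousOn_const (by fun_prop)
      intro s hs
      rw [Set.uIcc_of_le (by linarith)] at hs
      have : (1:ℝ) - s ≠ 0 := by nlinarith [hs.1, hs.2]
      positivity
    rw [intervalIntegral.integral_sub intervalIntegrable_const hintA]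
    rw [calcA r hr0 hr1]
    simp
    ring
  rw [key, calcA r hr0 hr1, calcB r hr0 hr1]
  ring
end

section
/- For r ∈ (0,1), the function S(v_B, v_S) = r²/(v_B−v_S)² solves the partial integral equation π(v_B,v_S)(v_B−v_S) − S(v_B,v_S) − ∫_0^{v_S} π(v_B,s) ds − π(v_B,0) = 0 on the region {(v_B,v_S) : v_B−v_S > r, v_B < 1, v_S > 0}, where π(v_B,v_S) = −∂S/∂v_B = 2r²/(v_B−v_S)³ and π(v_B,0) = r²/v_B². -/
lemma deriv_aux (r c x : ℝ) (hx : x - c ≠ 0) :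
    HasDerivAt (fun b : ℝ => r ^ 2 / (b - c) ^ 2) (-(2 * r ^ 2 / (x - c) ^ 3)) x := by
  have h1 : HasDerivAt (fun b : ℝ => (b - c) ^ 2) (2 * (x - c)) x := by
    have := ((hasDerivAt_id x).sub_const c).fun_pow 2
    simpa using this
  have h2 := (hasDerivAt_const x (r ^ 2)).fun_div h1 (pow_ne_zero 2 hx)
  refine h2.congr_deriv ?_
  field_simp
  ring

theorem stmt_10 (r : ℝ) (hr0 : 0 < r) (hr1 : r < 1) :
    ∀ vB vS : ℝ, r < vB - vS → vB < 1 → 0 < vS →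
      HasDerivAt (fun b : ℝ => r ^ 2 / (b - vS) ^ 2) (-(2 * r ^ 2 / (vB - vS) ^ 3)) vB ∧
      (2 * r ^ 2 / (vB - vS) ^ 3) * (vB - vS) - r ^ 2 / (vB - vS) ^ 2 -
        (∫ s in (0 : ℝ)..vS, 2 * r ^ 2 / (vB - s) ^ 3) - r ^ 2 / vB ^ 2 = 0 := by
  intro vB vS hgap hB hS
  have hpos : 0 < vB - vS := lt_trans hr0 hgap
  have hvB : 0 < vB := by linarith
  constructor
  · exact deriv_aux r vS vB (ne_of_gt hpos)
  · have hderiv : ∀ s ∈ Set.uIcc (0 : ℝ) vS,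
        HasDerivAt (fun s : ℝ => r ^ 2 / (vB - s) ^ 2) (2 * r ^ 2 / (vB - s) ^ 3) s := by
      intro s hs
      rw [Set.uIcc_of_le hS.le] at hs
      have hsne : vB - s > 0 := by
        have := hs.2
        linarith
      have h1 : HasDerivAt (fun t : ℝ => (vB - t) ^ 2) (2 * (vB - s) * (-1)) s := by
        have h0 : HasDerivAt (fun t : ℝ => vB - t) (-1 : ℝ) s := by
          simpa using ((hasDerivAt_id s).const_sub vB)
        have := h0.fun_pow 2
        refine this.congr_deriv ?_; ring
      have h2 := (hasDerivAt_const s (r ^ 2)).fun_div h1 (pow_ne_zero 2 (ne_of_gt hsne))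
      refine h2.congr_deriv ?_
      field_simp
      ring
    have hcont : IntervalIntegrable (fun s : ℝ => 2 * r ^ 2 / (vB - s) ^ 3)
        MeasureTheory.volume 0 vS := by
      apply ContinuousOn.intervalIntegrable
      apply ContinuousOn.div continuousOn_const (by fun_prop)
      intro s hs
      rw [Set.uIcc_of_le hS.le] at hs
      have : vB - s > 0 := by linarith [hs.2]
      positivity
    have hint := intervalIntegral.integral_eq_sub_of_hasDerivAt hderiv hcont
    rw [hint]
    have h1 : (vB - vS) ≠ 0 := ne_of_gt hpos
    have h2 : vB ≠ 0 := ne_of_gt hvB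
    field_simp
    ring
end

section
/- Let r ∈ (0,1) and define q(v_B,v_S) = (v_B−v_S−r)/(1−r) if v_B−v_S > r and 0 otherwise, on [0,1]². Then the ex-post profit t(v) = (v_B−v_S)q(v) − ∫_0^{v_B} q(x,v_S) dx − ∫_{v_S}^1 q(v_B,x) dx equals (r/(1−r))·v_B − (r/(1−r))·v_S − r²/(1−r) for all (v_B,v_S) with v_B−v_S ≥ r, and t(v) = 0 when v_B − v_S ≤ r. -/
/-- Trading rule of the random double auction with commission `r`. -/
noncomputable def rdaQ (r vB vS : ℝ) : ℝ :=
  if vB - vS > r then (vB - vS - r) / (1 - r) else 0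

/-- Ex-post profit via the envelope formula. -/
noncomputable def rdaT (r vB vS : ℝ) : ℝ :=
  (vB - vS) * rdaQ r vB vS - (∫ x in (0 : ℝ)..vB, rdaQ r x vS)
    - (∫ x in vS..(1 : ℝ), rdaQ r vB x)

lemma rdaQ_eq_max (r : ℝ) (hr1 : r < 1) (a b : ℝ) :
    rdaQ r a b = max (a - b - r) 0 / (1 - r) := by
  unfold rdaQ
  split_ifs with h
  · rw [max_eq_left (by linarith)]
  · rw [max_eq_right (by push_neg at h; linarith), zero_div]

lemma relu_cont (c : ℝ) : Continuous fun x : ℝ => max (x - c) 0 :=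
  (continuous_id.sub continuous_const).max continuous_const

lemma relu_integral_zero (a b c : ℝ) (ha : a ≤ c) (hb : b ≤ c) :
    (∫ x in a..b, max (x - c) 0) = 0 := by
  rw [intervalIntegral.integral_congr (g := fun _ => (0:ℝ))]
  · simp
  · intro x hx
    rcases le_total a b with h | h
    · rw [Set.uIcc_of_le h] at hx
      exact max_eq_right (by linarith [hx.2])
    · rw [Set.uIcc_of_ge h] at hx
      exact max_eq_right (by linarith [hx.2])

lemma relu_integral (a b c : ℝ) (ha : a ≤ c) (hb : c ≤ b) :
    (∫ x in a..b, max (x - c) 0) = (b - c) ^ 2 / 2 := by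
  have hi : ∀ u v : ℝ, IntervalIntegrable (fun x => max (x - c) 0) MeasureTheory.volume u v :=
    fun u v => (relu_cont c).intervalIntegrable u v
  rw [← intervalIntegral.integral_add_adjacent_intervals (hi a c) (hi c b),
    relu_integral_zero a c c ha le_rfl, zero_add]
  have : (∫ x in c..b, max (x - c) 0) = ∫ x in c..b, (x - c) := by
    apply intervalIntegral.integral_congr
    intro x hx
    rw [Set.uIcc_of_le hb] at hx
    exact max_eq_left (by linarith [hx.1])
  rw [this, intervalIntegral.integral_comp_sub_right (fun x => x) c,
    integral_id]
  ring

lemma relu_integral' (a b c : ℝ) (ha : a ≤ c) (hb : c ≤ b) :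
    (∫ x in a..b, max (c - x) 0) = (c - a) ^ 2 / 2 := by
  have : (∫ x in a..b, max (c - x) 0) = ∫ x in a..b, (fun y => max (y - (-c)) 0) (-x) := by
    apply intervalIntegral.integral_congr
    intro x _
    simp only []
    ring_nf
  rw [this, intervalIntegral.integral_comp_neg (fun y => max (y - (-c)) 0),
    relu_integral (-b) (-a) (-c) (by linarith) (by linarith)]
  ring

lemma relu_integral_zero' (a b c : ℝ) (ha : c ≤ a) (hb : c ≤ b) :
    (∫ x in a..b, max (c - x) 0) = 0 := by
  rw [intervalIntegral.integral_congr (g := fun _ => (0:ℝ))]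
  · simp
  · intro x hx
    rcases le_total a b with h | h
    · rw [Set.uIcc_of_le h] at hx
      exact max_eq_right (by linarith [hx.1])
    · rw [Set.uIcc_of_ge h] at hx
      exact max_eq_right (by linarith [hx.1])

theorem stmt_11 (r : ℝ) (hr0 : 0 < r) (hr1 : r < 1) :
    ∀ vB vS : ℝ, vB ∈ Set.Icc (0 : ℝ) 1 → vS ∈ Set.Icc (0 : ℝ) 1 →
      (vB - vS ≥ r →
        rdaT r vB vS = (r / (1 - r)) * vB - (r / (1 - r)) * vS - r ^ 2 / (1 - r)) ∧
      (vB - vS ≤ r → rdaT r vB vS = 0) := by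
  intro vB vS hB hS
  obtain ⟨hB0, hB1⟩ := hB
  obtain ⟨hS0, hS1⟩ := hS
  have hrne : (1 : ℝ) - r ≠ 0 := by linarith
  have hq1 : ∀ x, rdaQ r x vS = max (x - (vS + r)) 0 / (1 - r) := by
    intro x; rw [rdaQ_eq_max r hr1]; ring_nf
  have hq2 : ∀ x, rdaQ r vB x = max ((vB - r) - x) 0 / (1 - r) := by
    intro x; rw [rdaQ_eq_max r hr1]; ring_nf
  have hI1 : (∫ x in (0:ℝ)..vB, rdaQ r x vS)
      = (∫ x in (0:ℝ)..vB, max (x - (vS + r)) 0) / (1 - r) := by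
    simp_rw [hq1]; rw [intervalIntegral.integral_div]
  have hI2 : (∫ x in vS..(1:ℝ), rdaQ r vB x)
      = (∫ x in vS..(1:ℝ), max ((vB - r) - x) 0) / (1 - r) := by
    simp_rw [hq2]; rw [intervalIntegral.integral_div]
  constructor
  · intro hge
    have h1 : (∫ x in (0:ℝ)..vB, max (x - (vS + r)) 0) = (vB - (vS + r)) ^ 2 / 2 :=
      relu_integral 0 vB (vS + r) (by linarith) (by linarith)
    have h2 : (∫ x in vS..(1:ℝ), max ((vB - r) - x) 0) = ((vB - r) - vS) ^ 2 / 2 :=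
      relu_integral' vS 1 (vB - r) (by linarith) (by linarith)
    have hQ : rdaQ r vB vS = (vB - vS - r) / (1 - r) := by
      rw [rdaQ_eq_max r hr1, max_eq_left (by linarith)]
    rw [rdaT, hQ, hI1, hI2, h1, h2]
    field_simp
    ring
  · intro hle
    have h1 : (∫ x in (0:ℝ)..vB, max (x - (vS + r)) 0) = 0 :=
      relu_integral_zero 0 vB (vS + r) (by linarith) (by linarith)
    have h2 : (∫ x in vS..(1:ℝ), max ((vB - r) - x) 0) = 0 :=
      relu_integral_zero' vS 1 (vB - r) (by linarith) (by linarith)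
    have hQ : rdaQ r vB vS = 0 := by
      rw [rdaQ_eq_max r hr1, max_eq_right (by linarith), zero_div]
    rw [rdaT, hQ, hI1, hI2, h1, h2]
    ring
end

section
/- For any probability measure π on [0,1]² with marginal means ∫ v_B dπ = M_B and ∫ v_S dπ = M_S, where M_B + M_S = 1 and 0 < M_S < M_B < 1, and with r = 1 − √(1−(M_B−M_S)), the expected ex-post profit of the random double auction satisfies ∫ max{0, (r/(1−r))(v_B−v_S−r)} dπ ≥ r². -/
open MeasureTheory

theorem stmt_13 (π : Measure (ℝ × ℝ)) [IsProbabilityMeasure π]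
    (hsupp : π ((Set.Icc (0 : ℝ) 1 ×ˢ Set.Icc (0 : ℝ) 1)ᶜ) = 0)
    (M_B M_S : ℝ) (h0 : 0 < M_S) (hlt : M_S < M_B) (h1 : M_B < 1)
    (hsum : M_B + M_S = 1)
    (hB : (∫ p, p.1 ∂π) = M_B) (hS : (∫ p, p.2 ∂π) = M_S) :
    (1 - Real.sqrt (1 - (M_B - M_S))) ^ 2 ≤
      ∫ p, max 0 ((1 - Real.sqrt (1 - (M_B - M_S))) / (1 - (1 - Real.sqrt (1 - (M_B - M_S)))) *
        (p.1 - p.2 - (1 - Real.sqrt (1 - (M_B - M_S))))) ∂π := by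
  set s := Real.sqrt (1 - (M_B - M_S)) with hs
  have hpos : (0:ℝ) < 1 - (M_B - M_S) := by linarith
  have hs2 : s ^ 2 = 1 - (M_B - M_S) := Real.sq_sqrt hpos.le
  have hspos : 0 < s := Real.sqrt_pos.mpr hpos
  have hs1 : s < 1 := by nlinarith
  set r : ℝ := 1 - s with hr
  set c : ℝ := r / (1 - r) with hc
  have hc' : c = (1 - s) / s := by rw [hc, hr]; ring_nf
  have hMB : 0 < M_B := by linarith
  have hIB : Integrable (fun p : ℝ × ℝ => p.1) π := by
    by_contra h
    rw [integral_undef h] at hB; linarith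
  have hIS : Integrable (fun p : ℝ × ℝ => p.2) π := by
    by_contra h
    rw [integral_undef h] at hS; linarith
  have hg : Integrable (fun p : ℝ × ℝ => c * (p.1 - p.2 - r)) π :=
    (((hIB.sub hIS).sub (integrable_const r))).const_mul c
  have hfm : Measurable (fun p : ℝ × ℝ => max 0 (c * (p.1 - p.2 - r))) :=
    measurable_const.max (((measurable_fst.sub measurable_snd).sub measurable_const).const_mul c)
  have hf : Integrable (fun p : ℝ × ℝ => max 0 (c * (p.1 - p.2 - r))) π := by
    refine hg.mono hfm.aestronglyMeasurable (ae_of_all _ fun p => ?_)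
    simp only [Real.norm_eq_abs]
    rw [abs_of_nonneg (le_max_left (0:ℝ) _)]
    exact max_le (abs_nonneg _) (le_abs_self _)
  have hmono : ∫ p, c * (p.1 - p.2 - r) ∂π ≤
      ∫ p, max 0 (c * (p.1 - p.2 - r)) ∂π :=
    integral_mono hg hf (fun p => le_max_right _ _)
  have hcomp : ∫ p, c * (p.1 - p.2 - r) ∂π = c * (M_B - M_S - r) := by
    have hI1 : Integrable (fun p : ℝ × ℝ => p.1 - p.2) π := hIB.sub hIS
    rw [integral_const_mul, integral_sub hI1 (integrable_const r),
      integral_sub hIB hIS, hB, hS, integral_const]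
    simp
  have heq : c * (M_B - M_S - r) = r ^ 2 := by
    have hms : M_B - M_S = 1 - s ^ 2 := by linarith
    rw [hc', hr, hms]
    field_simp
    ring
  calc r ^ 2 = c * (M_B - M_S - r) := heq.symm
    _ = ∫ p, c * (p.1 - p.2 - r) ∂π := hcomp.symm
    _ ≤ _ := hmono
end

section
/- As r₁ + r₂ → 1 with r₁ fixed in (0,1), H₁(r₁,r₂) → (1 − r₁² + 2r₁)/2 and H₂(r₁,r₂) → (1−r₁)²/2, where H₁ and H₂ are as given; consequently H₁ + H₂ → 1 on the anti-diagonal. -/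
open Filter Topology

lemma tendstoG : Tendsto (fun t : ℝ => (Real.log (1 + t) - t) / t ^ 2) (𝓝[≠] (0:ℝ))
    (𝓝 (-(1/2))) := by
  rw [← tendsto_sub_nhds_zero_iff]
  refine squeeze_zero_norm' (a := fun t : ℝ => 2 * |t|) ?_ ?_
  · filter_upwards [self_mem_nhdsWithin,
      eventually_nhdsWithin_of_eventually_nhds
        (eventually_abs_sub_lt 0 (by norm_num : (0:ℝ) < 1/2))] with t ht ht2
    have ht0 : t ≠ 0 := ht
    rw [sub_zero] at ht2
    have hlt1 : |(-t)| < 1 := by rw [abs_neg]; linarith [abs_nonneg t]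
    have key := Real.abs_log_sub_add_sum_range_le hlt1 2
    simp only [Finset.sum_range_succ, Finset.sum_range_zero] at key
    have h1 : (1 : ℝ) - -t = 1 + t := by ring
    rw [h1] at key
    have ht2' : t ^ 2 ≠ 0 := pow_ne_zero 2 ht0
    have heq : (Real.log (1 + t) - t) / t ^ 2 - -(1/2)
        = (0 + (-t) ^ (0+1) / (0+1) + (-t) ^ (1+1) / (1+1) + Real.log (1 + t)) / t ^ 2 := by
      field_simp
      ring
    rw [heq, Real.norm_eq_abs, abs_div]
    have hden : |t ^ 2| = t ^ 2 := abs_of_nonneg (sq_nonneg t)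
    rw [hden]
    have hb : |(-t)| ^ (2+1) / (1 - |(-t)|) ≤ 2 * |t| * t ^ 2 := by
      rw [abs_neg]
      rw [div_le_iff₀ (by linarith [abs_nonneg t])]
      have h3 : |t| ^ (2+1) = t ^ 2 * |t| := by rw [pow_succ, sq_abs]
      rw [h3]
      nlinarith [mul_nonneg (sq_nonneg t) (abs_nonneg t)]
    have hpos : (0:ℝ) < t ^ 2 := by positivity
    calc |0 + (-t) ^ (0+1) / (0+1) + (-t) ^ (1+1) / (1+1) + Real.log (1 + t)| / t ^ 2
        ≤ (2 * |t| * t ^ 2) / t ^ 2 := by gcongr; exact le_trans (by convert key using 4 <;> norm_num; rfl) hb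
      _ = 2 * |t| := by field_simp
  · have : Tendsto (fun t : ℝ => 2 * |t|) (𝓝 0) (𝓝 (2 * |(0:ℝ)|)) :=
      (continuous_const.mul continuous_abs).tendsto 0
    simpa using this.mono_left nhdsWithin_le_nhds

noncomputable def H1'' (r₁ r₂ : ℝ) : ℝ :=
  (1 - r₂) * r₁ * (1 - r₁) ^ 2 / (1 - r₁ - r₂) ^ 2 * Real.log ((1 - r₂) / r₁)
    - r₁ * r₂ * (1 - r₁) / (1 - r₁ - r₂) + r₁

noncomputable def H2'' (r₁ r₂ : ℝ) : ℝ :=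
  r₁ * (1 - r₂) * r₂ ^ 2 / (1 - r₁ - r₂) ^ 2 * Real.log ((1 - r₂) / r₁)
    - r₁ * r₂ ^ 2 / (1 - r₁ - r₂)

theorem stmt_17 (r₁ : ℝ) (h₁ : r₁ ∈ Set.Ioo (0 : ℝ) 1) :
    Tendsto (fun r₂ => H1'' r₁ r₂) (𝓝[≠] (1 - r₁)) (𝓝 ((1 - r₁ ^ 2 + 2 * r₁) / 2)) ∧
    Tendsto (fun r₂ => H2'' r₁ r₂) (𝓝[≠] (1 - r₁)) (𝓝 ((1 - r₁) ^ 2 / 2)) ∧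
    Tendsto (fun r₂ => H1'' r₁ r₂ + H2'' r₁ r₂) (𝓝[≠] (1 - r₁)) (𝓝 1) := by
  obtain ⟨hr0, hr1⟩ := h₁
  have hr0' : r₁ ≠ 0 := ne_of_gt hr0
  set g : ℝ → ℝ := fun r₂ => (Real.log (1 + (1 - r₁ - r₂) / r₁) - (1 - r₁ - r₂) / r₁)
      / ((1 - r₁ - r₂) / r₁) ^ 2 with hg
  have hmap : Tendsto (fun r₂ : ℝ => (1 - r₁ - r₂) / r₁) (𝓝[≠] (1 - r₁)) (𝓝[≠] (0:ℝ)) := by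
    rw [tendsto_nhdsWithin_iff]
    constructor
    · have hc : Tendsto (fun r₂ : ℝ => (1 - r₁ - r₂) / r₁) (𝓝 (1 - r₁))
          (𝓝 ((1 - r₁ - (1 - r₁)) / r₁)) :=
        ((continuous_const.sub continuous_id).div_const r₁).tendsto (1 - r₁)
      simpa using hc.mono_left nhdsWithin_le_nhds
    · filter_upwards [self_mem_nhdsWithin] with r₂ hr₂
      simp only [Set.mem_compl_iff, Set.mem_singleton_iff] at hr₂ ⊢
      intro h
      apply hr₂
      have := (div_eq_zero_iff.mp h).resolve_right hr0'
      linarith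
  have hGlim : Tendsto g (𝓝[≠] (1 - r₁)) (𝓝 (-(1/2))) := tendstoG.comp hmap
  have hOne : Tendsto (fun r₂ : ℝ => (1 - r₂)) (𝓝[≠] (1 - r₁)) (𝓝 r₁) := by
    have hc : Tendsto (fun r₂ : ℝ => (1 - r₂)) (𝓝 (1 - r₁)) (𝓝 (1 - (1 - r₁))) :=
      (continuous_const.sub continuous_id).tendsto (1 - r₁)
    simpa using hc.mono_left nhdsWithin_le_nhds
  have hId : Tendsto (fun r₂ : ℝ => r₂) (𝓝[≠] (1 - r₁)) (𝓝 (1 - r₁)) :=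
    (continuous_id.tendsto (1 - r₁)).mono_left nhdsWithin_le_nhds
  have hεne : ∀ r₂ : ℝ, r₂ ∈ ({1 - r₁}ᶜ : Set ℝ) → 1 - r₁ - r₂ ≠ 0 := by
    intro r₂ hr₂ h
    exact hr₂ (by simp only [Set.mem_singleton_iff]; linarith)
  have hlog : ∀ r₂ : ℝ, Real.log ((1 - r₂) / r₁) = Real.log (1 + (1 - r₁ - r₂) / r₁) := by
    intro r₂
    congr 1
    field_simp
    ring
  have key1 : ∀ r₂ ∈ ({1 - r₁}ᶜ : Set ℝ), H1'' r₁ r₂ =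
      (1 - r₁) ^ 2 + r₁ * (1 - r₁) + r₁ + (1 - r₂) * (1 - r₁) ^ 2 / r₁ * g r₂ := by
    intro r₂ hr₂
    have hε := hεne r₂ hr₂
    rw [H1'', hlog, hg]
    field_simp
    ring
  have key2 : ∀ r₂ ∈ ({1 - r₁}ᶜ : Set ℝ), H2'' r₁ r₂ =
      r₂ ^ 2 + (1 - r₂) * r₂ ^ 2 / r₁ * g r₂ := by
    intro r₂ hr₂
    have hε := hεne r₂ hr₂
    rw [H2'', hlog, hg]
    field_simp
    ring
  have hA : Tendsto (fun r₂ => H1'' r₁ r₂) (𝓝[≠] (1 - r₁)) (𝓝 ((1 - r₁ ^ 2 + 2 * r₁) / 2)) := by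
    have hrhs : Tendsto (fun r₂ : ℝ =>
        (1 - r₁) ^ 2 + r₁ * (1 - r₁) + r₁ + (1 - r₂) * (1 - r₁) ^ 2 / r₁ * g r₂)
        (𝓝[≠] (1 - r₁))
        (𝓝 ((1 - r₁) ^ 2 + r₁ * (1 - r₁) + r₁ + r₁ * (1 - r₁) ^ 2 / r₁ * (-(1/2)))) :=
      tendsto_const_nhds.add (((hOne.mul tendsto_const_nhds).div_const r₁).mul hGlim)
    have heq : (1 - r₁) ^ 2 + r₁ * (1 - r₁) + r₁ + r₁ * (1 - r₁) ^ 2 / r₁ * (-(1/2))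
        = (1 - r₁ ^ 2 + 2 * r₁) / 2 := by field_simp; ring
    rw [heq] at hrhs
    refine Tendsto.congr' ?_ hrhs
    filter_upwards [self_mem_nhdsWithin] with r₂ h
    exact (key1 r₂ h).symm
  have hB : Tendsto (fun r₂ => H2'' r₁ r₂) (𝓝[≠] (1 - r₁)) (𝓝 ((1 - r₁) ^ 2 / 2)) := by
    have hrhs : Tendsto (fun r₂ : ℝ => r₂ ^ 2 + (1 - r₂) * r₂ ^ 2 / r₁ * g r₂)
        (𝓝[≠] (1 - r₁))
        (𝓝 ((1 - r₁) ^ 2 + r₁ * (1 - r₁) ^ 2 / r₁ * (-(1/2)))) :=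
      (hId.pow 2).add (((hOne.mul (hId.pow 2)).div_const r₁).mul hGlim)
    have heq : (1 - r₁) ^ 2 + r₁ * (1 - r₁) ^ 2 / r₁ * (-(1/2)) = (1 - r₁) ^ 2 / 2 := by
      field_simp; ring
    rw [heq] at hrhs
    refine Tendsto.congr' ?_ hrhs
    filter_upwards [self_mem_nhdsWithin] with r₂ h
    exact (key2 r₂ h).symm
  refine ⟨hA, hB, ?_⟩
  have := hA.add hB
  have hval : (1 - r₁ ^ 2 + 2 * r₁) / 2 + (1 - r₁) ^ 2 / 2 = 1 := by ring
  rwa [hval] at this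
end

section
/- Suppose M_B, M_S ∈ (0,1) with √(M_S) + √(1−M_B) < 1. Set c₁* = 1 − √(1−M_B) and c₂* = √(M_S). Then the function K(c₁,c₂) = ((c₁−c₂)/(1−c₁))·M_B − ((c₁−c₂)/c₂)·M_S − c₁(c₁−c₂)/(1−c₁) over the domain 0 < c₂ < c₁ < 1 attains its maximum at (c₁*, c₂*), with maximum value (1 − √(M_S) − √(1−M_B))². -/
noncomputable def Kfun (M_B M_S c₁ c₂ : ℝ) : ℝ :=
  (c₁ - c₂) / (1 - c₁) * M_B - (c₁ - c₂) / c₂ * M_S - c₁ * (c₁ - c₂) / (1 - c₁)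

theorem stmt_18 (M_B M_S : ℝ) (hB : M_B ∈ Set.Ioo (0 : ℝ) 1) (hS : M_S ∈ Set.Ioo (0 : ℝ) 1)
    (h : Real.sqrt M_S + Real.sqrt (1 - M_B) < 1) :
    (0 < Real.sqrt M_S ∧ Real.sqrt M_S < 1 - Real.sqrt (1 - M_B) ∧
      1 - Real.sqrt (1 - M_B) < 1) ∧
    Kfun M_B M_S (1 - Real.sqrt (1 - M_B)) (Real.sqrt M_S) =
      (1 - Real.sqrt M_S - Real.sqrt (1 - M_B)) ^ 2 ∧
    (∀ c₁ c₂ : ℝ, 0 < c₂ → c₂ < c₁ → c₁ < 1 →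
      Kfun M_B M_S c₁ c₂ ≤ Kfun M_B M_S (1 - Real.sqrt (1 - M_B)) (Real.sqrt M_S)) := by
  obtain ⟨hB0, hB1⟩ := hB
  obtain ⟨hS0, hS1⟩ := hS
  set a := Real.sqrt (1 - M_B) with ha
  set s := Real.sqrt M_S with hs
  have ha0 : 0 < a := Real.sqrt_pos.2 (by linarith)
  have hs0 : 0 < s := Real.sqrt_pos.2 hS0
  have ha2 : a ^ 2 = 1 - M_B := Real.sq_sqrt (by linarith)
  have hs2 : s ^ 2 = M_S := Real.sq_sqrt hS0.le
  have hval : Kfun M_B M_S (1 - a) s = (1 - s - a) ^ 2 := by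
    unfold Kfun
    have h1 : 1 - (1 - a) = a := by ring
    rw [h1, show M_B = 1 - a ^ 2 by linarith, show M_S = s ^ 2 by linarith]
    field_simp
    ring
  refine ⟨⟨hs0, by linarith, by linarith⟩, hval, ?_⟩
  intro c₁ c₂ h1 h2 h3
  rw [hval]
  have hu : (0:ℝ) < 1 - c₁ := by linarith
  have hK : Kfun M_B M_S c₁ c₂ =
      (c₁ - c₂) * (1 - a ^ 2 / (1 - c₁) - s ^ 2 / c₂) := by
    unfold Kfun
    rw [ha2, hs2]
    field_simp
    ring
  rw [hK]
  have hA : 2 * a - (1 - c₁) ≤ a ^ 2 / (1 - c₁) := by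
    rw [le_div_iff₀ hu]; nlinarith [sq_nonneg (a - (1 - c₁))]
  have hS' : 2 * s - c₂ ≤ s ^ 2 / c₂ := by
    rw [le_div_iff₀ h1]; nlinarith [sq_nonneg (s - c₂)]
  nlinarith [sq_nonneg ((c₁ - c₂) - (1 - a - s)), sq_nonneg (1 - a - s)]
end
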